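/- Let G be a graph, let q ∈ ℕ, let (a,b) be a q-slim pair of vertices in G, and let (T, χ) be a tree decomposition of G. Then there exists I ⊆ V(T) with |I| < q such that for every a–b-path P in G, the set ⋃_{t ∈ I} χ(t) intersects the interior P* of P. -/

import Mathlib

open SimpleGraph

/-- `H` is an induced minor of `G`: there are pairwise disjoint nonempty connected
induced subgraphs `X w` of `G`, one for each vertex `w` of `H`, such that distinct
branch sets are anticomplete iff the corresponding vertices are non-adjacent in `H`. -/
def IsInducedMinor {V W : Type*} (G : SimpleGraph V) (H : SimpleGraph W) : Prop :=
  ∃ X : W → Set V,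
    (∀ w, (X w).Nonempty) ∧
    (∀ w, (G.induce (X w)).Connected) ∧
    (∀ w₁ w₂, w₁ ≠ w₂ → Disjoint (X w₁) (X w₂)) ∧
    (∀ w₁ w₂, w₁ ≠ w₂ →
      ((∀ a ∈ X w₁, ∀ b ∈ X w₂, ¬ G.Adj a b) ↔ ¬ H.Adj w₁ w₂))

/-- The `t`-by-`t` hexagonal grid (wall), in the brick-wall representation. -/
def hexGrid (t : ℕ) : SimpleGraph (Fin t × Fin (2 * t)) :=
  SimpleGraph.fromRel (fun a b =>
    (a.1 = b.1 ∧ a.2.val + 1 = b.2.val) ∨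
    (a.2 = b.2 ∧ a.1.val + 1 = b.1.val ∧ (a.1.val + a.2.val) % 2 = 0))

/-- Membership in the class `𝒞_t` of `{K_{t,t}, W_{t×t}}`-induced-minor-free graphs. -/
def MemCt (t : ℕ) {V : Type*} (G : SimpleGraph V) : Prop :=
  ¬ IsInducedMinor G (completeBipartiteGraph (Fin t) (Fin t)) ∧
  ¬ IsInducedMinor G (hexGrid t)

/-- Membership in `𝒞_t^*`: member of `𝒞_t` with no clique of size `t`. -/
def MemCtStar (t : ℕ) {V : Type*} (G : SimpleGraph V) : Prop :=
  MemCt t G ∧ G.CliqueFree t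

/-- A tree decomposition of `G` with tree `τ` and bags `χ`. -/
def IsTreeDecomp {V T : Type*} (G : SimpleGraph V) (τ : SimpleGraph T)
    (χ : T → Finset V) : Prop :=
  τ.IsTree ∧
  (∀ v : V, ∃ i, v ∈ χ i) ∧
  (∀ u v : V, G.Adj u v → ∃ i, u ∈ χ i ∧ v ∈ χ i) ∧
  (∀ v : V, (τ.induce {i | v ∈ χ i}).Connected)

/-- The treewidth of a finite graph: the least `k` such that `G` admits a tree
decomposition with all bags of size at most `k + 1`. -/
noncomputable def treewidth {V : Type*} [Fintype V] (G : SimpleGraph V) : ℕ :=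
  sInf { k | ∃ (n : ℕ) (τ : SimpleGraph (Fin n)) (χ : Fin n → Finset V),
    IsTreeDecomp G τ χ ∧ ∀ i, (χ i).card ≤ k + 1 }

/-- A walk that is an induced (chordless) path. -/
def IsInducedPathW {V : Type*} (G : SimpleGraph V) {u v : V} (P : G.Walk u v) : Prop :=
  P.IsPath ∧ ∀ a ∈ P.support, ∀ b ∈ P.support, G.Adj a b → s(a, b) ∈ P.edges

/-- The interior of a path: its support minus its two ends. -/
def interiorW {V : Type*} {G : SimpleGraph V} {u v : V} (P : G.Walk u v) : Set V :=
  {x | x ∈ P.support ∧ x ≠ u ∧ x ≠ v}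

/-- `S` separates `a` from `b` in `G`: every walk from `a` to `b` meets `S`. -/
def Separates {V : Type*} (G : SimpleGraph V) (S : Set V) (a b : V) : Prop :=
  ∀ P : G.Walk a b, ∃ x ∈ S, x ∈ P.support

/-- `conn_G(a,b)`: the minimum size of an `a`–`b`-separator. -/
noncomputable def connNum {V : Type*} [Fintype V] (G : SimpleGraph V) (a b : V) : ℕ :=
  sInf { k | ∃ S : Set V, a ∉ S ∧ b ∉ S ∧ Separates G S a b ∧ S.ncard = k }

/-- `A` and `B` are anticomplete: disjoint, with no edges between them. -/
def Anticomplete {V : Type*} (G : SimpleGraph V) (A B : Set V) : Prop :=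
  Disjoint A B ∧ ∀ a ∈ A, ∀ b ∈ B, ¬ G.Adj a b

/-- The graph `G \ M`: delete the vertices of `M` (they become isolated). -/
def delVerts {V : Type*} (G : SimpleGraph V) (M : Set V) : SimpleGraph V where
  Adj a b := G.Adj a b ∧ a ∉ M ∧ b ∉ M
  symm := ⟨fun _ _ h => ⟨h.1.symm, h.2.2, h.2.1⟩⟩
  loopless := ⟨fun a h => G.loopless.irrefl a h.1⟩

/-- The set of connected components of `C` in `G`: maximal connected subsets of `C`. -/
def ccSet {V : Type*} (G : SimpleGraph V) (C : Set V) : Set (Set V) :=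
  { D | D ⊆ C ∧ D.Nonempty ∧ (G.induce D).Connected ∧
      ∀ D' : Set V, D ⊆ D' → D' ⊆ C → (G.induce D').Connected → D' = D }

/-- `(a,b)` is `s`-wide: there are `s` pairwise internally anticomplete `a`–`b`-paths. -/
def Wide {V : Type*} (G : SimpleGraph V) (s : ℕ) (a b : V) : Prop :=
  ∃ P : Fin s → G.Walk a b,
    (∀ i, IsInducedPathW G (P i)) ∧
    (∀ i j, i ≠ j → ∀ x ∈ interiorW (P i), ∀ y ∈ interiorW (P j), x ≠ y ∧ ¬ G.Adj x y)

/-- `(a,b)` is an `s`-slim pair: non-adjacent and not `s`-wide. -/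
def SlimPair {V : Type*} (G : SimpleGraph V) (s : ℕ) (a b : V) : Prop :=
  a ≠ b ∧ ¬ G.Adj a b ∧ ¬ Wide G s a b

/-- `G` is `(t,s)`-slim: every stable set of size `t` contains an `s`-slim pair. -/
def TSSlim {V : Type*} (G : SimpleGraph V) (t s : ℕ) : Prop :=
  ∀ S : Finset V, S.card = t → (∀ a ∈ S, ∀ b ∈ S, a ≠ b → ¬ G.Adj a b) →
    ∃ a ∈ S, ∃ b ∈ S, a ≠ b ∧ SlimPair G s a b

/-- `(X,Y,Z,C)` is a `(t,p)`-barrier in `G`. -/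
def IsTPBarrier {V : Type*} (G : SimpleGraph V) (t p : ℕ) (X Y Z C : Set V) : Prop :=
  List.Pairwise Disjoint [X, Y, Z, C] ∧
  (∀ x ∈ X, ∀ z ∈ Z, ∀ P : G.Walk x z, IsInducedPathW G P →
    (∀ w ∈ P.support, w ∉ C) →
    ∃ x' ∈ X, ∃ z' ∈ Z, ∃ Q : G.Walk x' z',
      IsInducedPathW G Q ∧ (∀ w ∈ Q.support, w ∉ C) ∧
      (∀ w ∈ Q.support, w ∈ P.support) ∧ (∀ w ∈ interiorW Q, w ∈ Y)) ∧
  (∀ x ∈ X, ∀ z ∈ Z, ∀ P : G.Walk x z, IsInducedPathW G P →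
    (∀ w ∈ P.support, w ∉ C) →
    t ≤ Set.ncard { D ∈ ccSet G C | ∃ c ∈ D, ∃ w ∈ P.support, G.Adj c w }) ∧
  (∀ D ∈ ccSet G C, D.ncard ≤ p)

/-- The barrier `(X,Y,Z,C)` separates `u` from `v` in `G`. -/
def BarSeparates {V : Type*} (G : SimpleGraph V) (X Y Z C : Set V) (u v : V) : Prop :=
  u ∉ X ∪ Y ∪ Z ∪ C ∧ v ∉ X ∪ Y ∪ Z ∪ C ∧
  Separates G (X ∪ C) u v ∧ Separates G (Z ∪ C) u v

/-- A barrier is reduced: every component of `X ∪ Y ∪ Z` meets both `X` and `Z`. -/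
def ReducedBarrier {V : Type*} (G : SimpleGraph V) (X Y Z : Set V) : Prop :=
  ∀ D ∈ ccSet G (X ∪ Y ∪ Z), (D ∩ X).Nonempty ∧ (D ∩ Z).Nonempty

/-- `G` is `(s,t,p,c,f,g)`-slim-barred. -/
def SlimBarred {V : Type*} [Fintype V] (G : SimpleGraph V) (s t p : ℕ)
    (c f g : ℕ → ℕ) : Prop :=
  ∀ u v : V, SlimPair G s u v →
    ∃ X Y Z C M : Set V,
      List.Pairwise Disjoint [X, Y, Z, C, M] ∧
      (∀ w ∈ X ∪ Y ∪ Z ∪ C ∪ M, w ≠ u ∧ w ≠ v) ∧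
      IsTPBarrier (delVerts G M) t p X Y Z C ∧
      BarSeparates (delVerts G M) X Y Z C u v ∧
      Set.ncard (ccSet (delVerts G M) C) ≤ c (Fintype.card V) ∧
      M.ncard ≤ f (Fintype.card V) ∧
      (X ∪ Y ∪ Z).ncard ≤ g (Fintype.card V)

/-- `(a,b)` is `(x,y,z,p)`-mineable in `G`. -/
def Mineable {V : Type*} (G : SimpleGraph V) (a b : V) (x y z p : ℕ) : Prop :=
  ∃ Ys Xs : Fin x → Set V,
    (∀ i, a ∉ Ys i ∧ b ∉ Ys i) ∧
    (∀ i j, i ≠ j → Anticomplete G (Ys i) (Ys j)) ∧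
    (∀ i, (Xs i).Nonempty ∧ a ∉ Xs i ∧ b ∉ Xs i ∧
      Xs i ⊆ {w | w ∉ Ys i ∧ ∃ y' ∈ Ys i, G.Adj y' w}) ∧
    (∀ i, Separates (delVerts G {v | ∃ j, j < i ∧ v ∈ Ys j}) (Ys i ∪ Xs i) a b) ∧
    (delVerts G {v | ∃ j, v ∈ Ys j}).Reachable a b ∧
    (∀ i, Set.ncard (ccSet G (Ys i)) ≤ y) ∧
    (∀ i, ∀ D ∈ ccSet G (Ys i), D.ncard ≤ p) ∧
    (∀ w : V, Set.ncard {i : Fin x | w ∈ Ys i ∪ Xs i} ≤ z)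

/-- Two vertices are twins: same neighbourhoods away from each other. -/
def Twins {V : Type*} (G : SimpleGraph V) (u v : V) : Prop :=
  G.neighborSet u \ {v} = G.neighborSet v \ {u}

/-- A star structure on `G`: an induced star forest with vertex set `C ∪ L`, each
component a star with at least two vertices, with centers `C`, leaves `L`, and each
leaf `l` attached to the center `ctr l`. -/
structure StarStructure {V : Type*} (G : SimpleGraph V) (C L : Set V)
    (ctr : V → V) : Prop where
  disj : Disjoint C L
  ctrMem : ∀ l ∈ L, ctr l ∈ C ∧ G.Adj (ctr l) l
  hasLeaf : ∀ c ∈ C, ∃ l ∈ L, ctr l = c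
  inducedStar : ∀ a ∈ C ∪ L, ∀ b ∈ C ∪ L, G.Adj a b →
    (a ∈ C ∧ b ∈ L ∧ ctr b = a) ∨ (b ∈ C ∧ a ∈ L ∧ ctr a = b)

/-- Centers of the projection `F(G')` of the star forest onto the induced subgraph
of `G` with vertex set `W`. -/
def projCenters {V : Type*} (C L : Set V) (ctr : V → V) (W : Set V) : Set V :=
  {c | c ∈ C ∧ c ∈ W ∧ ∃ l, l ∈ L ∧ l ∈ W ∧ ctr l = c}

/-- The star of `F(G')` with center `c`. -/
def projStar {V : Type*} (L : Set V) (ctr : V → V) (W : Set V) (c : V) : Set V :=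
  insert c {l | l ∈ L ∧ l ∈ W ∧ ctr l = c}

/-- The vertex set of `F(G')`. -/
def projVerts {V : Type*} (C L : Set V) (ctr : V → V) (W : Set V) : Set V :=
  ⋃ c ∈ projCenters C L ctr W, projStar L ctr W c

/-- `X` is an `F(G')`-based set. -/
def FBasedSet {V : Type*} (C L : Set V) (ctr : V → V) (W X : Set V) : Prop :=
  ∀ c ∈ projCenters C L ctr W,
    (projStar L ctr W c ∩ X).Nonempty → projStar L ctr W c ⊆ X

/-- The `F(G')`-measure of a set `X`: the number of stars of `F(G')` meeting `X` plus
the number of vertices of `X` outside `F(G')`. -/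
noncomputable def FMeasure {V : Type*} (C L : Set V) (ctr : V → V) (W X : Set V) : ℕ :=
  Set.ncard {c ∈ projCenters C L ctr W | (projStar L ctr W c ∩ X).Nonempty} +
  Set.ncard (X \ projVerts C L ctr W)

/-- A tree decomposition of the induced subgraph of `G` with vertex set `W`. -/
def IsTreeDecompOn {V T : Type*} (G : SimpleGraph V) (W : Set V)
    (τ : SimpleGraph T) (χ : T → Finset V) : Prop :=
  τ.IsTree ∧
  (∀ i, (χ i : Set V) ⊆ W) ∧
  (∀ v ∈ W, ∃ i, v ∈ χ i) ∧
  (∀ u ∈ W, ∀ v ∈ W, G.Adj u v → ∃ i, u ∈ χ i ∧ v ∈ χ i) ∧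
  (∀ v : V, (τ.induce {i | v ∈ χ i}).Connected)

/-- `G` is `(F,r)`-based: every induced subgraph `G[W]` admits a tree decomposition in
which every bag is `F(G[W])`-based with `F(G[W])`-measure at most `r`. -/
def FrBased {V : Type*} [Fintype V] (G : SimpleGraph V) (C L : Set V)
    (ctr : V → V) (r : ℕ) : Prop :=
  ∀ W : Set V, ∃ (n : ℕ) (τ : SimpleGraph (Fin n)) (χ : Fin n → Finset V),
    IsTreeDecompOn G W τ χ ∧
    ∀ i, FBasedSet C L ctr W (χ i) ∧ FMeasure C L ctr W (χ i) ≤ r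

/-- Every component of `H` is a star or a single vertex. -/
def IsStarForest {W : Type*} (H : SimpleGraph W) : Prop :=
  H.IsAcyclic ∧ ∀ (u v : W) (P : H.Walk u v), P.IsPath → P.length ≤ 2

/-- `G` has a star coloring with `k` colors. -/
def HasStarColoring {V : Type*} (G : SimpleGraph V) (k : ℕ) : Prop :=
  ∃ f : V → Fin k, (∀ u v, G.Adj u v → f u ≠ f v) ∧
    ∀ i j : Fin k, IsStarForest (G.induce {v | f v = i ∨ f v = j})

/-- `G` contains an induced subgraph isomorphic to a proper subdivision of `K_s`. -/
def InducedProperSubdivisionK {V : Type*} (G : SimpleGraph V) (s : ℕ) : Prop :=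
  ∃ (v : Fin s → V) (P : ∀ i j : Fin s, G.Walk (v i) (v j)),
    Function.Injective v ∧
    (∀ i j, i ≠ j → ¬ G.Adj (v i) (v j)) ∧
    (∀ i j, i < j → IsInducedPathW G (P i j) ∧ (interiorW (P i j)).Nonempty) ∧
    (∀ i j k l, i < j → k < l → (i, j) ≠ (k, l) →
      ∀ x ∈ interiorW (P i j), ∀ y ∈ interiorW (P k l), x ≠ y ∧ ¬ G.Adj x y) ∧
    (∀ i j k, i < j → k ≠ i → k ≠ j →
      ∀ x ∈ interiorW (P i j), x ≠ v k ∧ ¬ G.Adj x (v k))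

/-- `S` is the vertex set of an induced path of `G`. -/
def IsPathSet {V : Type*} (G : SimpleGraph V) (S : Set V) : Prop :=
  ∃ (u v : V) (P : G.Walk u v), IsInducedPathW G P ∧ S = {x | x ∈ P.support}

/-- A linear induced `H`-model in `G`: an induced `H`-model all of whose branch sets
are paths. -/
def LinearInducedModel {V W : Type*} (G : SimpleGraph V) (H : SimpleGraph W) : Prop :=
  ∃ X : W → Set V,
    (∀ w, IsPathSet G (X w)) ∧
    (∀ w, (X w).Nonempty) ∧
    (∀ w₁ w₂, w₁ ≠ w₂ → Disjoint (X w₁) (X w₂)) ∧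
    (∀ w₁ w₂, w₁ ≠ w₂ →
      ((∀ a ∈ X w₁, ∀ b ∈ X w₂, ¬ G.Adj a b) ↔ ¬ H.Adj w₁ w₂))


section Aux

open SimpleGraph Walk

variable {V' : Type*} {G' : SimpleGraph V'}

private lemma end_not_in_takeUntil [DecidableEq V'] {u v x : V'} {p : G'.Walk u v}
    (hp : p.IsPath) (hx : x ∈ p.support) (hxv : x ≠ v) :
    v ∉ (p.takeUntil x hx).support := by
  intro hv
  have hnd := hp.support_nodup
  rw [← p.take_spec hx, Walk.support_append] at hnd
  have hvd : v ∈ ((p.dropUntil x hx).support).tail := by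
    have hvend : v ∈ (p.dropUntil x hx).support := Walk.end_mem_support _
    rw [Walk.support_eq_cons] at hvend
    rcases List.mem_cons.mp hvend with h | h
    · exact absurd h hxv.symm
    · exact h
  exact (List.disjoint_of_nodup_append hnd) hv hvd

private lemma start_not_in_dropUntil [DecidableEq V'] {u v x : V'} {p : G'.Walk u v}
    (hp : p.IsPath) (hx : x ∈ p.support) (hxu : x ≠ u) :
    u ∉ (p.dropUntil x hx).support := by
  intro hu
  have hnd := hp.support_nodup
  rw [← p.take_spec hx, Walk.support_append] at hnd
  have h2 : u ∈ ((p.dropUntil x hx).support).tail := by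
    rw [Walk.support_eq_cons] at hu
    rcases List.mem_cons.mp hu with h | h
    · exact absurd h hxu.symm
    · exact h
  exact (List.disjoint_of_nodup_append hnd) (Walk.start_mem_support _) h2

/-- Between two interior vertices of a path there is a walk staying in the interior. -/
private lemma segment_lemma {u v : V'} {p : G'.Walk u v} (hp : p.IsPath)
    {x y : V'} (hx : x ∈ p.support) (hy : y ∈ p.support)
    (hxu : x ≠ u) (hxv : x ≠ v) (hyu : y ≠ u) (hyv : y ≠ v) :
    ∃ w : G'.Walk x y, ∀ z ∈ w.support, z ∈ p.support ∧ z ≠ u ∧ z ≠ v := by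
  classical
  by_cases hyd : y ∈ (p.dropUntil x hx).support
  · have hdp : (p.dropUntil x hx).IsPath := hp.dropUntil hx
    refine ⟨(p.dropUntil x hx).takeUntil y hyd, ?_⟩
    intro z hz
    have hz1 : z ∈ (p.dropUntil x hx).support := Walk.support_takeUntil_subset _ _ hz
    have hz2 : z ∈ p.support := Walk.support_dropUntil_subset _ _ hz1
    refine ⟨hz2, ?_, ?_⟩
    · intro h; exact (start_not_in_dropUntil hp hx hxu) (h ▸ hz1)
    · intro h; exact (end_not_in_takeUntil hdp hyd hyv) (h ▸ hz)
  · have hyt : y ∈ (p.takeUntil x hx).support := by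
      conv at hy => rw [← p.take_spec hx, Walk.support_append]
      rcases List.mem_append.mp hy with h | h
      · exact h
      · exact absurd (List.mem_of_mem_tail h) hyd
    have htkp : (p.takeUntil x hx).reverse.IsPath := (hp.takeUntil hx).reverse
    have hy' : y ∈ (p.takeUntil x hx).reverse.support := by
      rw [Walk.support_reverse]; exact List.mem_reverse.mpr hyt
    refine ⟨(p.takeUntil x hx).reverse.takeUntil y hy', ?_⟩
    intro z hz
    have hz1 : z ∈ (p.takeUntil x hx).reverse.support :=
      Walk.support_takeUntil_subset _ _ hz
    have hz2 : z ∈ (p.takeUntil x hx).support := by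
      rwa [Walk.support_reverse, List.mem_reverse] at hz1
    refine ⟨Walk.support_takeUntil_subset _ _ hz2, ?_, ?_⟩
    · intro h; exact (end_not_in_takeUntil htkp hy' hyu) (h ▸ hz)
    · intro h; exact (end_not_in_takeUntil hp hx hxv) (h ▸ hz2)

/-- An induced path between distinct non-adjacent vertices has an interior vertex. -/
private lemma interior_nonempty' {a b : V'} (P : G'.Walk a b)
    (hP : P.IsPath) (hab : a ≠ b) (hnadj : ¬ G'.Adj a b) :
    ∃ w, w ∈ P.support ∧ w ≠ a ∧ w ≠ b := by
  cases P with
  | nil => exact absurd rfl hab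
  | cons h p =>
    rename_i c
    cases p with
    | nil => exact absurd h hnadj
    | cons h' p' =>
      have hp2 : (Walk.cons h' p').IsPath := hP.of_cons
      refine ⟨c, by simp, h.ne', ?_⟩
      rintro rfl
      rw [Walk.isPath_iff_eq_nil] at hp2
      simp at hp2

/-- Packing–covering duality for subtrees of a tree: if a family of nonempty connected
subsets of a tree has no `q` pairwise disjoint members, it has a hitting set of
size `< q`. -/
private lemma tree_hit {T : Type} [Fintype T] (τ : SimpleGraph T) (htree : τ.IsTree) :
    ∀ (q : ℕ) (F : Set (Set T)),
      (∀ A ∈ F, A.Nonempty ∧ ∀ x ∈ A, ∀ y ∈ A,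
        ∃ p : τ.Walk x y, ∀ z ∈ p.support, z ∈ A) →
      (¬ ∃ f : Fin q → Set T, (∀ i, f i ∈ F) ∧ ∀ i j, i ≠ j → Disjoint (f i) (f j)) →
      ∃ I : Finset T, I.card < q ∧ ∀ A ∈ F, ∃ i ∈ I, i ∈ A := by
  classical
  obtain ⟨hne, huniq⟩ := isTree_iff_existsUnique_path.mp htree
  have hch : ∀ u v : T, ∃ p : τ.Walk u v, p.IsPath ∧ ∀ p' : τ.Walk u v, p'.IsPath → p' = p :=
    fun u v => (huniq u v).imp (fun p hp => ⟨hp.1, hp.2⟩)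
  choose pth hpth hu using hch
  obtain ⟨r⟩ := hne
  -- the unique path is contained in every walk
  have hsub : ∀ (u v : T) (w : τ.Walk u v), ∀ z ∈ (pth u v).support, z ∈ w.support := by
    intro u v w z hz
    have hb : w.bypass = pth u v := hu u v w.bypass w.bypass_isPath
    rw [← hb] at hz
    exact w.support_bypass_subset hz
  -- a vertex on the unique path from the root with larger depth equals the endpoint
  have claim4 : ∀ (t u : T) (ht : t ∈ (pth r u).support),
      (pth r u).length ≤ (pth r t).length → u = t := by
    intro t u ht hle
    have htk : (pth r u).takeUntil t ht = pth r t := hu r t _ ((hpth r u).takeUntil ht)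
    have hlen : ((pth r u).takeUntil t ht).length + ((pth r u).dropUntil t ht).length
        = (pth r u).length := by
      rw [← Walk.length_append, (pth r u).take_spec ht]
    rw [htk] at hlen
    have h0 : ((pth r u).dropUntil t ht).length = 0 := by omega
    exact (Walk.eq_of_length_eq_zero h0).symm
  -- one step of ancestry propagation
  have step : ∀ t y y', τ.Adj y y' → t ∈ (pth r y).support →
      (pth r t).length ≤ (pth r y').length → t ∈ (pth r y').support := by
    intro t y y' hadj hty hle
    by_cases hmem : t ∈ (pth r y').support
    · exact hmem
    have hty' : t = y := by
      have h1 := hsub r y ((pth r y').concat hadj.symm) t hty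
      rw [Walk.support_concat] at h1
      rcases List.mem_append.mp h1 with h | h
      · exact absurd h hmem
      · simpa using h
    exfalso
    rw [hty'] at hle
    by_cases hy' : y' ∈ (pth r y).support
    · have htk : (pth r y).takeUntil y' hy' = pth r y' :=
        hu r y' _ ((hpth r y).takeUntil hy')
      have hlen : ((pth r y).takeUntil y' hy').length + ((pth r y).dropUntil y' hy').length
          = (pth r y).length := by
        rw [← Walk.length_append, (pth r y).take_spec hy']
      rw [htk] at hlen
      have hne' : ((pth r y).dropUntil y' hy').length ≠ 0 := by
        intro h0
        exact hadj.ne' (Walk.eq_of_length_eq_zero h0)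
      omega
    · have hcp : ((pth r y).concat hadj).IsPath := by
        rw [Walk.isPath_def, Walk.support_concat]
        exact List.Nodup.append (hpth r y).support_nodup (List.nodup_singleton y')
          (by simpa using hy')
      have heq : (pth r y).concat hadj = pth r y' := hu r y' _ hcp
      apply hmem
      rw [hty', ← heq, Walk.support_concat]
      exact List.mem_append.mpr (Or.inl (pth r y).end_mem_support)
  -- propagate along a walk inside a depth-minimal set
  have claim1 : ∀ (t : T) (A : Set T), (∀ z ∈ A, (pth r t).length ≤ (pth r z).length) →
      ∀ {c x : T} (w : τ.Walk c x), (∀ z ∈ w.support, z ∈ A) →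
      t ∈ (pth r c).support → t ∈ (pth r x).support := by
    intro t A hmin c x w
    induction w with
    | nil => exact fun _ h => h
    | cons hadj p ih =>
      intro hsupp hc
      refine ih (fun z hz => hsupp z (by simp [hz])) ?_
      exact step t _ _ hadj hc (hmin _ (hsupp _ (by simp [Walk.start_mem_support])))
  have claim3 : ∀ t u x, t ∈ (pth r x).support → t ∉ (pth r u).support →
      t ∈ (pth u x).support := by
    intro t u x hx hu'
    have h1 := hsub r x ((pth r u).append (pth u x)) t hx
    rw [Walk.support_append] at h1
    rcases List.mem_append.mp h1 with h | h
    · exact absurd h hu'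
    · exact List.mem_of_mem_tail h
  intro q
  induction q with
  | zero =>
    intro F hF hpack
    exact absurd ⟨Fin.elim0, fun i => i.elim0, fun i j _ => i.elim0⟩ hpack
  | succ q ih =>
    intro F hF hpack
    by_cases hFne : F.Nonempty
    · set m : Set T → ℕ := fun A => sInf ((fun x => (pth r x).length) '' A) with hm
      obtain ⟨A, hAF, hAmax⟩ := Set.Finite.exists_maximalFor m F (Set.toFinite F) hFne
      obtain ⟨hAne, hAconn⟩ := hF A hAF
      obtain ⟨t, htA, htD0⟩ := Nat.sInf_mem (hAne.image (fun x => (pth r x).length))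
      have htD : (pth r t).length = m A := htD0
      have hmin : ∀ z ∈ A, (pth r t).length ≤ (pth r z).length := by
        intro z hz
        rw [htD]
        exact Nat.sInf_le ⟨z, hz, rfl⟩
      have claim2 : ∀ B ∈ F, t ∉ B → ∀ x ∈ A, x ∉ B := by
        intro B hBF htB x hxA hxB
        obtain ⟨hBne, hBconn⟩ := hF B hBF
        obtain ⟨u, huB, huD0⟩ := Nat.sInf_mem (hBne.image (fun x => (pth r x).length))
        have huD : (pth r u).length = m B := huD0
        have hmB : m B ≤ m A := by
          by_contra h
          push_neg at h
          have := hAmax hBF h.le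
          omega
        have hut : (pth r u).length ≤ (pth r t).length := by
          rw [huD, htD]; exact hmB
        have hunet : u ≠ t := fun h => htB (h ▸ huB)
        have htnu : t ∉ (pth r u).support := fun h => hunet (claim4 t u h hut)
        obtain ⟨w, hw⟩ := hAconn t htA x hxA
        have htx : t ∈ (pth r x).support :=
          claim1 t A hmin w hw (pth r t).end_mem_support
        have hux : t ∈ (pth u x).support := claim3 t u x htx htnu
        obtain ⟨w2, hw2⟩ := hBconn u huB x hxB
        exact htB (hw2 t (hsub u x w2 t hux))
      have hpack' : ¬ ∃ f : Fin q → Set T,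
          (∀ i, f i ∈ {B ∈ F | t ∉ B}) ∧ ∀ i j, i ≠ j → Disjoint (f i) (f j) := by
        rintro ⟨f, hf1, hf2⟩
        apply hpack
        refine ⟨Fin.cons A f, ?_, ?_⟩
        · intro i
          induction i using Fin.cases with
          | zero => simpa using hAF
          | succ j => simpa using (hf1 j).1
        · intro i j hij
          have hdAf : ∀ k : Fin q, Disjoint A (f k) := by
            intro k
            rw [Set.disjoint_left]
            exact fun {x} hxA hxB => claim2 (f k) (hf1 k).1 (hf1 k).2 x hxA hxB
          induction i using Fin.cases with
          | zero =>
            induction j using Fin.cases with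
            | zero => exact absurd rfl hij
            | succ j' => simpa using hdAf j'
          | succ i' =>
            induction j using Fin.cases with
            | zero => simpa using (hdAf i').symm
            | succ j' =>
              simp only [Fin.cons_succ]
              exact hf2 i' j' (fun h => hij (by rw [h]))
      obtain ⟨I', hI'card, hI'hit⟩ := ih {B ∈ F | t ∉ B} (fun B hB => hF B hB.1) hpack'
      refine ⟨insert t I', ?_, ?_⟩
      · have := Finset.card_insert_le t I'
        omega
      · intro B hBF
        by_cases htB : t ∈ B
        · exact ⟨t, Finset.mem_insert_self t I', htB⟩
        · obtain ⟨i, hiI, hiB⟩ := hI'hit B ⟨hBF, htB⟩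
          exact ⟨i, Finset.mem_insert_of_mem hiI, hiB⟩
    · exact ⟨∅, by simp, fun B hB => absurd ⟨B, hB⟩ hFne⟩

end Aux

theorem stmt12 {V T : Type} [Fintype V] [Fintype T] (G : SimpleGraph V) (q : ℕ)
    (a b : V) (hslim : SlimPair G q a b)
    (τ : SimpleGraph T) (χ : T → Finset V) (hdec : IsTreeDecomp G τ χ) :
    ∃ I : Finset T, I.card < q ∧
      ∀ (P : G.Walk a b), IsInducedPathW G P →
        ∃ w ∈ interiorW P, ∃ i ∈ I, w ∈ χ i := by
  classical
  obtain ⟨hne, hnadj, hnwide⟩ := hslim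
  obtain ⟨htree, hbag, hedge, hconn⟩ := hdec
  rcases Nat.eq_zero_or_pos q with rfl | hq
  · exact absurd ⟨Fin.elim0, fun i => i.elim0, fun i j h => i.elim0⟩ hnwide
  -- walks within a bag-set of a single vertex
  have hbagwalk : ∀ (w : V) (t1 t2 : T), w ∈ χ t1 → w ∈ χ t2 →
      ∃ p : τ.Walk t1 t2, ∀ z ∈ p.support, w ∈ χ z := by
    intro w t1 t2 h1 h2
    obtain ⟨p⟩ := (hconn w).preconnected ⟨t1, h1⟩ ⟨t2, h2⟩
    refine ⟨p.map (SimpleGraph.Embedding.induce {i | w ∈ χ i}).toHom, ?_⟩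
    intro z hz
    replace hz : z ∈ p.support.map (SimpleGraph.Embedding.induce (G := τ) {i | w ∈ χ i}).toHom := by
      rw [← SimpleGraph.Walk.support_map]; exact hz
    obtain ⟨zz, hzz, rfl⟩ := List.mem_map.mp hz
    exact zz.2
  -- glue bag-sets along a walk in the interior
  have L2 : ∀ (P : G.Walk a b) {x y : V} (p : G.Walk x y),
      (∀ z ∈ p.support, z ∈ interiorW P) → ∀ (t1 t2 : T),
      x ∈ χ t1 → y ∈ χ t2 →
      ∃ q' : τ.Walk t1 t2, ∀ i ∈ q'.support, ∃ w ∈ interiorW P, w ∈ χ i := by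
    intro P x y p
    induction p with
    | nil =>
      intro hs t1 t2 h1 h2
      obtain ⟨q', hq'⟩ := hbagwalk _ t1 t2 h1 h2
      exact ⟨q', fun i hi => ⟨_, hs _ (by simp), hq' i hi⟩⟩
    | cons hadj p ih =>
      intro hs t1 t2 h1 h2
      obtain ⟨t0, ht0x, ht0c⟩ := hedge _ _ hadj
      obtain ⟨q1, hq1⟩ := hbagwalk _ t1 t0 h1 ht0x
      obtain ⟨q2, hq2⟩ := ih (fun z hz => hs z (by simp [hz])) t0 t2 ht0c h2
      refine ⟨q1.append q2, ?_⟩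
      intro i hi
      rw [SimpleGraph.Walk.support_append] at hi
      rcases List.mem_append.mp hi with h | h
      · exact ⟨_, hs _ (SimpleGraph.Walk.start_mem_support _), hq1 i h⟩
      · exact hq2 i (List.mem_of_mem_tail h)
  set F : Set (Set T) :=
    {S | ∃ P : G.Walk a b, IsInducedPathW G P ∧ S = {t | ∃ w ∈ interiorW P, w ∈ χ t}} with hF
  have hFmem : ∀ A ∈ F, A.Nonempty ∧ ∀ t1 ∈ A, ∀ t2 ∈ A,
      ∃ p : τ.Walk t1 t2, ∀ z ∈ p.support, z ∈ A := by
    rintro A ⟨P, hP, rfl⟩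
    constructor
    · obtain ⟨w, hw, hwa, hwb⟩ := interior_nonempty' P hP.1 hne hnadj
      obtain ⟨t, ht⟩ := hbag w
      exact ⟨t, w, ⟨hw, hwa, hwb⟩, ht⟩
    · rintro t1 ⟨w1, hw1, hw1t⟩ t2 ⟨w2, hw2, hw2t⟩
      obtain ⟨p, hp⟩ := segment_lemma hP.1 hw1.1 hw2.1 hw1.2.1 hw1.2.2 hw2.2.1 hw2.2.2
      obtain ⟨q', hq'⟩ := L2 P p (fun z hz => hp z hz) t1 t2 hw1t hw2t
      exact ⟨q', hq'⟩
  have hpack : ¬ ∃ f : Fin q → Set T,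
      (∀ i, f i ∈ F) ∧ ∀ i j, i ≠ j → Disjoint (f i) (f j) := by
    rintro ⟨f, hfF, hfd⟩
    apply hnwide
    choose P hP hPS using hfF
    refine ⟨P, hP, ?_⟩
    intro i j hij x hx y hy
    constructor
    · rintro rfl
      obtain ⟨t, ht⟩ := hbag x
      have h1 : t ∈ f i := by rw [hPS i]; exact ⟨x, hx, ht⟩
      have h2 : t ∈ f j := by rw [hPS j]; exact ⟨x, hy, ht⟩
      exact Set.disjoint_left.mp (hfd i j hij) h1 h2
    · intro hadj
      obtain ⟨t, ht1, ht2⟩ := hedge x y hadj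
      have h1 : t ∈ f i := by rw [hPS i]; exact ⟨x, hx, ht1⟩
      have h2 : t ∈ f j := by rw [hPS j]; exact ⟨y, hy, ht2⟩
      exact Set.disjoint_left.mp (hfd i j hij) h1 h2
  obtain ⟨I, hIcard, hIhit⟩ := tree_hit τ htree q F hFmem hpack
  refine ⟨I, hIcard, ?_⟩
  intro P hP
  obtain ⟨i, hiI, w, hw, hwχ⟩ := hIhit _ ⟨P, hP, rfl⟩
  exact ⟨w, hw, i, hiI, hwχ⟩
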